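/- For the production-sequence generation, the map from k ∈ {0, …, q−1} to the sequence (t_k(1), …, t_k(q)) with t_k(n) = ⌊n·p/q + k/q⌋ − ⌊(n−1)·p/q + k/q⌋ is injective whenever gcd(p, q) = 1 and 0 < p < q. -/

import Mathlib

/-- For gcd(p, q) = 1 and 0 < p < q, the map k ↦ (t_k(1), …, t_k(q)) from fractional
initial-token numerators to production sequences is injective. -/
theorem production_sequence_injective (p q : ℕ) (hp : 0 < p) (hpq : p < q)
    (hcop : Nat.Coprime p q) (k k' : ℕ) (hk : k < q) (hk' : k' < q)
    (h : ∀ n ∈ Finset.Icc 1 q,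
      ⌊(n : ℚ) * ((p : ℚ) / q) + (k : ℚ) / q⌋ -
        ⌊((n : ℚ) - 1) * ((p : ℚ) / q) + (k : ℚ) / q⌋ =
      ⌊(n : ℚ) * ((p : ℚ) / q) + (k' : ℚ) / q⌋ -
        ⌊((n : ℚ) - 1) * ((p : ℚ) / q) + (k' : ℚ) / q⌋) :
    k = k' := by
  have hq : 0 < q := lt_trans hp hpq
  have hq0 : (q : ℚ) ≠ 0 := by positivity
  have floorf : ∀ j m : ℕ, ⌊(m : ℚ) * ((p : ℚ)/q) + (j : ℚ)/q⌋ = (((m*p+j) / q : ℕ) : ℤ) := by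
    intro j m
    have e : (m : ℚ) * ((p : ℚ)/q) + (j : ℚ)/q = (((m*p+j : ℕ) : ℤ) : ℚ) / (q:ℚ) := by
      push_cast; ring
    rw [e, Rat.floor_intCast_div_natCast]
    exact (Int.natCast_ediv (m*p+j) q).symm
  -- telescoping induction, in ℕ
  have tel : ∀ m : ℕ, m ≤ q → (m*p+k) / q = (m*p+k') / q := by
    intro m
    induction m with
    | zero =>
      intro _
      simp only [Nat.zero_mul, Nat.zero_add]
      rw [Nat.div_eq_of_lt hk, Nat.div_eq_of_lt hk']
    | succ m ih =>
      intro hm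
      have hmem : (m+1 : ℕ) ∈ Finset.Icc 1 q := by
        simp only [Finset.mem_Icc]; omega
      have hh := h (m+1) hmem
      have e1 : ((m+1 : ℕ) : ℚ) - 1 = ((m : ℕ) : ℚ) := by push_cast; ring
      rw [e1, floorf k (m+1), floorf k' (m+1), floorf k m, floorf k' m] at hh
      have ihq := ih (by omega)
      omega
  by_contra hne
  wlog hlt : k < k' generalizing k k'
  · exact this k' k hk' hk (fun n hn => (h n hn).symm)
      (fun m hm => (tel m hm).symm) (Ne.symm hne) (by omega)
  -- find m ∈ [1, q] with q ∣ m*p + k'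
  have hex : ∃ m : ℕ, 1 ≤ m ∧ m ≤ q ∧ q ∣ (m*p+k') := by
    haveI : NeZero q := ⟨hq.ne'⟩
    have hu : IsUnit (p : ZMod q) := by rwa [ZMod.isUnit_iff_coprime]
    set a : ZMod q := (-(k' : ZMod q)) * (p : ZMod q)⁻¹ with hadef
    have hinv : (p : ZMod q)⁻¹ * (p : ZMod q) = 1 := ZMod.inv_mul_of_unit _ hu
    have ha : a * (p : ZMod q) = -(k' : ZMod q) := by
      rw [hadef, mul_assoc, hinv, mul_one]
    by_cases h0 : a = 0
    · have hk'0 : (k' : ZMod q) = 0 := by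
        have h3 : (0 : ZMod q) = -(k' : ZMod q) := by rw [← ha, h0, zero_mul]
        exact neg_eq_zero.mp h3.symm
      have hdk : q ∣ k' := (ZMod.natCast_eq_zero_iff k' q).mp hk'0
      have hk'z : k' = 0 := Nat.eq_zero_of_dvd_of_lt hdk hk'
      exact ⟨q, hq, le_refl q, by rw [hk'z]; exact ⟨p, by ring⟩⟩
    · refine ⟨a.val, ?_, le_of_lt (ZMod.val_lt a), ?_⟩
      · have : a.val ≠ 0 := fun hz => h0 ((ZMod.val_eq_zero a).mp hz)
        omega
      · have hc : ((a.val * p + k' : ℕ) : ZMod q) = 0 := by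
          push_cast
          rw [ZMod.natCast_val, ZMod.cast_id, ha]; ring
        exact (ZMod.natCast_eq_zero_iff _ q).mp hc
  obtain ⟨m, hm1, hmq, hdvd⟩ := hex
  have htm := tel m hmq
  obtain ⟨d, hd⟩ := hdvd
  have hd1 : 1 ≤ d := by nlinarith
  obtain ⟨d', rfl⟩ : ∃ d', d = d' + 1 := ⟨d - 1, by omega⟩
  have hd' : m * p + k' = q * d' + q := by rw [hd]; ring
  have e2 : d' * q = q * d' := by ring
  have e3 : (d' + 1) * q = q * d' + q := by ring
  have h1 : (m*p+k') / q = d' + 1 := by rw [hd]; exact Nat.mul_div_cancel_left _ hq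
  have h2 : (m*p+k) / q = d' := by
    apply Nat.div_eq_of_lt_le
    · linarith
    · linarith
  omega
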